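/- arXiv:2004.13957 — 2 statements merged into one kernel-verified Lean document; each statement's English description precedes it below -/
import Mathlib

section
/- For every t ≥ 0, almost surely the set {v : Y_v ≤ t} of nodes of the infinite binary tree is finite. -/
open MeasureTheory ProbabilityTheory Real Filter
open scoped ENNReal NNReal

noncomputable section

instance : MeasurableSpace (Finset (List Bool)) := ⊤

/-- `v` is an external node of the (extended) binary tree whose set of internal nodes is `T`:
`v` is not internal, but every strict prefix (strict ancestor) of `v` is internal. -/
def ExtNode (T : Finset (List Bool)) (v : List Bool) : Prop :=
  v ∉ T ∧ ∀ w, w <+: v → w ≠ v → w ∈ T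

/-- The external height of the binary tree with internal node set `T`:
one plus the maximal depth of an internal node (`0` for the empty tree). -/
def heExt (T : Finset (List Bool)) : ℕ := T.sup fun v => v.length + 1

/-- The random digital search tree process `(D n)`, identified with the process of its
sets of internal nodes: `D 0` is the empty tree; given the whole past with current value `t`,
the next tree is obtained by turning an external node `v` of `t` into an internal one,
chosen according to the harmonic measure `2 ^ (-depth v)`. -/
structure IsDST {Ω : Type*} [MeasurableSpace Ω] (P : Measure Ω)
    (D : ℕ → Ω → Finset (List Bool)) : Prop where
  meas : ∀ n, Measurable (D n)
  init : ∀ᵐ ω ∂P, D 0 ω = ∅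
  growth : ∀ n : ℕ, ∀ᵐ ω ∂P, ∃ v, ExtNode (D n ω) v ∧ D (n + 1) ω = insert v (D n ω)
  step : ∀ (n : ℕ) (ts : Fin (n + 1) → Finset (List Bool)) (v : List Bool),
    ExtNode (ts (Fin.last n)) v →
    P {ω | ∀ i : Fin (n + 1), D i ω = ts i} ≠ 0 →
    ProbabilityTheory.cond P {ω | ∀ i : Fin (n + 1), D i ω = ts i}
        {ω | D (n + 1) ω = insert v (ts (Fin.last n))}
      = ((2 : ℝ≥0∞) ^ v.length)⁻¹

/-- A family `(X v)` of independent exponential random variables indexed by the nodes of the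
infinite binary tree, `X v` having rate `2 ^ (-depth v)`. -/
def IsExpFamily {Ω : Type*} [MeasurableSpace Ω] (P : Measure Ω)
    (X : List Bool → Ω → ℝ) : Prop :=
  iIndepFun X P ∧
    ∀ v : List Bool, Measure.map (X v) P = ProbabilityTheory.expMeasure (((2 : ℝ) ^ v.length)⁻¹)

/-- `Y v = ∑_{w ⪯ v} X w`, the sum over the path from the root to `v` inclusive. -/
def pathSum {Ω : Type*} (X : List Bool → Ω → ℝ) (v : List Bool) (ω : Ω) : ℝ :=
  ∑ i ∈ Finset.range (v.length + 1), X (v.take i) ω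

/-- `Ỹ k = min { Y v : depth v = k }`. -/
def minDepthSum {Ω : Type*} (X : List Bool → Ω → ℝ) (k : ℕ) (ω : Ω) : ℝ :=
  ⨅ f : Fin k → Bool, pathSum X (List.ofFn f) ω

/-- An i.i.d. sequence of rate-one exponential random variables. -/
def IsExpSeq {Ω : Type*} [MeasurableSpace Ω] (P : Measure Ω) (η : ℕ → Ω → ℝ) : Prop :=
  iIndepFun η P ∧
    ∀ i : ℕ, Measure.map (η i) P = ProbabilityTheory.expMeasure 1

/-- A rate-one Poisson process on `[0, ∞)`. -/
structure IsPoissonProc {Ω : Type*} [MeasurableSpace Ω] (P : Measure Ω)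
    (N : ℝ → Ω → ℕ) : Prop where
  meas : ∀ t, Measurable (N t)
  init : ∀ᵐ ω ∂P, N 0 ω = 0
  mono : ∀ᵐ ω ∂P, ∀ s t : ℝ, s ≤ t → N s ω ≤ N t ω
  indepIncr : ∀ (n : ℕ) (t : Fin (n + 1) → ℝ), Monotone t →
    iIndepFun
      (fun i : Fin n => fun ω => N (t i.succ) ω - N (t i.castSucc) ω) P
  incrDist : ∀ s t : ℝ, 0 ≤ s → s ≤ t →
    Measure.map (fun ω => N t ω - N s ω) P
      = ProbabilityTheory.poissonMeasure (Real.toNNReal (t - s))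

/-- `v` is a neighbour of the sticky set `S` (in the complete binary tree):
its parent or one of its children is sticky. -/
def AdjSticky (S : Finset (List Bool)) (v : List Bool) : Prop :=
  (v ≠ [] ∧ v.dropLast ∈ S) ∨ ∃ b : Bool, v ++ [b] ∈ S

/-- `v` can be the next sticky node: `v` neighbours `S` and no strict ancestor of `v` does
(so the directed random walk from the root stops at `v` with probability `2 ^ (-depth v)`). -/
def AggEligible (S : Finset (List Bool)) (v : List Bool) : Prop :=
  AdjSticky S v ∧ ∀ w, w <+: v → w ≠ v → ¬ AdjSticky S w

/-- The `2 ^ K` nodes at depth `K`. -/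
def bottomRow (K : ℕ) : Finset (List Bool) :=
  (Finset.univ : Finset (Fin K → Bool)).image List.ofFn

/-- The border aggregation model on the complete binary tree `T_K` of height `K`,
described by the process `(S n)` of sticky sets: `S 0` is the set of nodes at depth `K`;
given the whole past with current sticky set `t` not containing the root, the next node to
become sticky is `v` with probability `2 ^ (-depth v)` for each eligible `v` (the stopping
point of the directed random walk from the root); the process freezes once the root is sticky. -/
structure IsBAM {Ω : Type*} [MeasurableSpace Ω] (K : ℕ) (P : Measure Ω)
    (S : ℕ → Ω → Finset (List Bool)) : Prop where
  meas : ∀ n, Measurable (S n)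
  init : ∀ᵐ ω ∂P, S 0 ω = bottomRow K
  frozen : ∀ n : ℕ, ∀ᵐ ω ∂P, [] ∈ S n ω → S (n + 1) ω = S n ω
  growth : ∀ n : ℕ, ∀ᵐ ω ∂P, [] ∉ S n ω →
    ∃ v, AggEligible (S n ω) v ∧ S (n + 1) ω = insert v (S n ω)
  step : ∀ (n : ℕ) (ts : Fin (n + 1) → Finset (List Bool)) (v : List Bool),
    [] ∉ ts (Fin.last n) → AggEligible (ts (Fin.last n)) v →
    P {ω | ∀ i : Fin (n + 1), S i ω = ts i} ≠ 0 →
    ProbabilityTheory.cond P {ω | ∀ i : Fin (n + 1), S i ω = ts i}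
        {ω | S (n + 1) ω = insert v (ts (Fin.last n))}
      = ((2 : ℝ≥0∞) ^ v.length)⁻¹

/-- `ξ_K`: the number of particles released until the root becomes sticky. -/
def hitRoot {Ω : Type*} (S : ℕ → Ω → Finset (List Bool)) (ω : Ω) : ℕ :=
  sInf {n : ℕ | [] ∈ S n ω}

/-- `Ξ_K = ∑_{i=1}^{ξ_K} η_i`: the time the root becomes sticky in the continuous-time model. -/
def aggTime {Ω : Type*} (S : ℕ → Ω → Finset (List Bool)) (η : ℕ → Ω → ℝ) (ω : Ω) : ℝ :=
  ∑ i ∈ Finset.range (hitRoot S ω), η i ω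

/-- `Ỹ*_k = min { n : heExt (D n) > k }`. -/
def hitHeight {Ω : Type*} (D : ℕ → Ω → Finset (List Bool)) (k : ℕ) (ω : Ω) : ℕ :=
  sInf {n : ℕ | k < heExt (D n ω)}

/-- `m_K = 2 ^ (K - √(2K) + (1/2)·log₂ K - 1/ln 2 + log₂ K/(4√(2K)))`. -/
def mPaper (K : ℕ) : ℝ :=
  (2 : ℝ) ^ ((K : ℝ) - Real.sqrt (2 * K) + (1 / 2) * Real.logb 2 K - 1 / Real.log 2
    + Real.logb 2 K / (4 * Real.sqrt (2 * K)))

lemma expMeasure_Iic_eq (r s : ℝ) (hr : 0 < r) :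
    ProbabilityTheory.expMeasure r (Set.Iic s)
      = ENNReal.ofReal (if 0 ≤ s then 1 - Real.exp (-(r * s)) else 0) := by
  rw [ProbabilityTheory.expMeasure, ProbabilityTheory.gammaMeasure,
    withDensity_apply _ measurableSet_Iic]
  exact ProbabilityTheory.lintegral_exponentialPDF_eq_antiDeriv hr s

lemma expMeasure_Iic_le (r s : ℝ) (hr : 0 < r) :
    ProbabilityTheory.expMeasure r (Set.Iic s) ≤ ENNReal.ofReal (r * s) := by
  rw [expMeasure_Iic_eq r s hr]
  split_ifs with h
  · apply ENNReal.ofReal_le_ofReal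
    have := Real.add_one_le_exp (-(r * s))
    linarith
  · simp

lemma expMeasure_Iio_zero (r : ℝ) :
    ProbabilityTheory.expMeasure r (Set.Iio 0) = 0 := by
  rw [ProbabilityTheory.expMeasure, ProbabilityTheory.gammaMeasure,
    withDensity_apply _ measurableSet_Iio]
  exact ProbabilityTheory.lintegral_exponentialPDF_of_nonpos le_rfl

lemma listBool_ofFn_cast {k : ℕ} (v : List Bool) (h : v.length = k) :
    List.ofFn (fun i : Fin k => v.get (Fin.cast h.symm i)) = v := by
  apply List.ext_getElem
  · simp [h]
  · intro i h1 h2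
    simp [List.getElem_ofFn]

/-- for every `t ≥ 0`, almost surely the set `{v | Y v ≤ t}` of nodes of the
infinite binary tree is finite. -/
theorem internalSet_ae_finite {Ω : Type} [MeasurableSpace Ω]
    (P : Measure Ω) [IsProbabilityMeasure P]
    (X : List Bool → Ω → ℝ) (hX : IsExpFamily P X) (t : ℝ) (ht : 0 ≤ t) :
    ∀ᵐ ω ∂P, {v : List Bool | pathSum X v ω ≤ t}.Finite := by
  obtain ⟨hindep, hmap⟩ := hX
  have hrate : ∀ v : List Bool, (0 : ℝ) < ((2 : ℝ) ^ v.length)⁻¹ := by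
    intro v; positivity
  -- each `X v` is a.e.-measurable
  have hae : ∀ v : List Bool, AEMeasurable (X v) P := by
    intro v
    by_contra h
    have h0 := hmap v
    rw [Measure.map_of_not_aemeasurable h] at h0
    have hprob := ProbabilityTheory.isProbabilityMeasure_expMeasure (hrate v)
    have := hprob.measure_univ
    rw [← h0] at this
    simp at this
  -- a.s. all `X v` are nonnegative
  have hnonneg : ∀ᵐ ω ∂P, ∀ v : List Bool, 0 ≤ X v ω := by
    rw [ae_all_iff]
    intro v
    have : P {ω | ¬ 0 ≤ X v ω} = 0 := by
      have : {ω | ¬ 0 ≤ X v ω} = X v ⁻¹' Set.Iio 0 := by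
        ext ω; simp [not_le]
      rw [this, ← Measure.map_apply_of_aemeasurable (hae v) measurableSet_Iio, hmap v,
        expMeasure_Iio_zero]
    exact this
  -- tail bound for a single variable
  have hatom : ∀ v : List Bool, P {ω | X v ω ≤ t}
      ≤ ENNReal.ofReal (((2 : ℝ) ^ v.length)⁻¹ * t) := by
    intro v
    have : {ω | X v ω ≤ t} = X v ⁻¹' Set.Iic t := rfl
    rw [this, ← Measure.map_apply_of_aemeasurable (hae v) measurableSet_Iic, hmap v]
    exact expMeasure_Iic_le _ t (hrate v)
  -- the bad sets at each level
  set s : ℕ → Set Ω := fun k =>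
    ⋃ f : Fin (k + 1) → Bool,
      ({ω | X (List.ofFn f) ω ≤ t} ∩ {ω | X ((List.ofFn f).take k) ω ≤ t}) with hs
  -- per-level bound
  have hlevel : ∀ k : ℕ, P (s k) ≤ ENNReal.ofReal (t ^ 2 * (2 : ℝ)⁻¹ ^ k) := by
    intro k
    calc P (s k) ≤ ∑ f : Fin (k + 1) → Bool,
        P ({ω | X (List.ofFn f) ω ≤ t} ∩ {ω | X ((List.ofFn f).take k) ω ≤ t}) :=
          measure_iUnion_fintype_le _ _
      _ ≤ ∑ _f : Fin (k + 1) → Bool,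
          (ENNReal.ofReal (((2 : ℝ) ^ (k + 1))⁻¹ * t)
            * ENNReal.ofReal (((2 : ℝ) ^ k)⁻¹ * t)) := by
          apply Finset.sum_le_sum
          intro f _
          set v : List Bool := List.ofFn f with hv
          set w : List Bool := v.take k with hw
          have hvlen : v.length = k + 1 := by simp [hv]
          have hwlen : w.length = k := by simp [hw, hvlen]
          have hvw : v ≠ w := by
            intro h
            rw [h] at hvlen
            rw [hwlen] at hvlen
            omega
          have hIndep : ProbabilityTheory.IndepFun (X v) (X w) P :=
            hindep.indepFun hvw
          have h1 : {ω | X v ω ≤ t} = X v ⁻¹' Set.Iic t := rfl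
          have h2 : {ω | X w ω ≤ t} = X w ⁻¹' Set.Iic t := rfl
          rw [h1, h2, hIndep.measure_inter_preimage_eq_mul _ _ measurableSet_Iic
            measurableSet_Iic]
          rw [← h1, ← h2]
          have b1 := hatom v
          have b2 := hatom w
          rw [hvlen] at b1
          rw [hwlen] at b2
          exact mul_le_mul' b1 b2
      _ = ENNReal.ofReal (t ^ 2 * (2 : ℝ)⁻¹ ^ k) := by
          rw [Finset.sum_const, Finset.card_univ, Fintype.card_fun]
          simp only [Fintype.card_fin, Fintype.card_bool, nsmul_eq_mul]
          have hb : ((2 : ℕ) ^ (k + 1) : ℝ≥0∞)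
              = ENNReal.ofReal ((2 : ℝ) ^ (k + 1)) := by
            rw [ENNReal.ofReal_pow (by norm_num)]
            norm_num
          rw [Nat.cast_pow, hb, ← ENNReal.ofReal_mul (by positivity),
            ← ENNReal.ofReal_mul (by positivity)]
          congr 1
          have h2k : ((2 : ℝ) ^ k) ≠ 0 := by positivity
          have h2k1 : ((2 : ℝ) ^ (k + 1)) ≠ 0 := by positivity
          rw [inv_pow]
          field_simp
  -- summability
  have hsum : (∑' k, P (s k)) ≠ ∞ := by
    apply ne_top_of_le_ne_top (b := ∑' k : ℕ, ENNReal.ofReal (t ^ 2 * (2 : ℝ)⁻¹ ^ k))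
    · have heq : ∀ k : ℕ, ENNReal.ofReal (t ^ 2 * (2 : ℝ)⁻¹ ^ k)
          = ENNReal.ofReal (t ^ 2) * (ENNReal.ofReal 2⁻¹) ^ k := by
        intro k
        rw [ENNReal.ofReal_mul (sq_nonneg t)]
        congr 1
        rw [ENNReal.ofReal_pow (by norm_num)]
      calc (∑' k : ℕ, ENNReal.ofReal (t ^ 2 * (2 : ℝ)⁻¹ ^ k))
          = ∑' k : ℕ, ENNReal.ofReal (t ^ 2) * (ENNReal.ofReal 2⁻¹) ^ k := by
            exact tsum_congr heq
        _ = ENNReal.ofReal (t ^ 2) * ∑' k : ℕ, (ENNReal.ofReal 2⁻¹) ^ k :=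
            ENNReal.tsum_mul_left
        _ ≠ ∞ := by
            apply ENNReal.mul_ne_top ENNReal.ofReal_ne_top
            rw [ENNReal.tsum_geometric]
            have : ENNReal.ofReal (2 : ℝ)⁻¹ = 2⁻¹ := by
              rw [ENNReal.ofReal_inv_of_pos (by norm_num)]
              norm_num
            rw [this, ENNReal.one_sub_inv_two]
            simp
    · exact ENNReal.tsum_le_tsum hlevel
  filter_upwards [ae_eventually_notMem hsum, hnonneg] with ω hev hpos
  rw [eventually_atTop] at hev
  obtain ⟨K, hK⟩ := hev
  apply (List.finite_length_le Bool K).subset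
  intro v hv
  simp only [Set.mem_setOf_eq] at hv ⊢
  by_contra hlen
  push_neg at hlen
  -- v has length k + 1 with k ≥ K
  obtain ⟨k, hk⟩ : ∃ k : ℕ, v.length = k + 1 := ⟨v.length - 1, by omega⟩
  have hkK : K ≤ k := by omega
  apply hK k hkK
  rw [hs]
  refine Set.mem_iUnion.2 ⟨fun i => v.get (Fin.cast hk.symm i), ?_⟩
  rw [listBool_ofFn_cast v hk]
  have hterm : ∀ i ∈ Finset.range (v.length + 1), X (v.take i) ω ≤ t := by
    intro i hi
    calc X (v.take i) ω
        ≤ ∑ j ∈ Finset.range (v.length + 1), X (v.take j) ω :=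
          Finset.single_le_sum (fun j _ => hpos (v.take j)) hi
      _ ≤ t := hv
  constructor
  · have := hterm (k + 1) (by rw [hk]; exact Finset.self_mem_range_succ _)
    rwa [← hk, List.take_length] at this
  · exact hterm k (by rw [hk]; exact Finset.mem_range.2 (by omega))

end
end

section
/- Let X and Y be random variables taking values in the nonnegative integers, and let (η_i)_{i≥1} be i.i.d. exponential random variables of rate 1, independent of X and independent of Y. If Σ_{i=1}^{X} η_i and Σ_{i=1}^{Y} η_i have the same distribution, then X and Y have the same distribution. -/
open MeasureTheory ProbabilityTheory Real Filter
open scoped ENNReal NNReal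

noncomputable section

section AuxExpSum

open Set in
lemma expInt' {t : ℝ} (ht : t < 1) :
    ∫ x, rexp (t * x) ∂(expMeasure 1) = (1 - t)⁻¹ := by
  have hmeas : Measurable fun x => (gammaPDFReal 1 1 x).toNNReal :=
    (measurable_gammaPDFReal 1 1).real_toNNReal
  have h1 : expMeasure 1 = Measure.withDensity volume
      (fun x => ((gammaPDFReal 1 1 x).toNNReal : ℝ≥0∞)) := rfl
  rw [h1, integral_withDensity_eq_integral_smul hmeas]
  have h2 : (fun x => (gammaPDFReal 1 1 x).toNNReal • rexp (t * x))
      = Set.indicator (Ici (0:ℝ)) (fun x => rexp (-x) * rexp (t * x)) := by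
    funext x
    rw [NNReal.smul_def, Real.coe_toNNReal _ (gammaPDFReal_nonneg zero_lt_one zero_lt_one x)]
    by_cases hx : 0 ≤ x
    · simp [gammaPDFReal, hx, Set.indicator_of_mem (mem_Ici.2 hx)]
    · simp [gammaPDFReal, hx, Set.indicator_of_notMem (fun h => hx (mem_Ici.1 h))]
  rw [h2, integral_indicator measurableSet_Ici, MeasureTheory.integral_Ici_eq_integral_Ioi]
  have h3 : ∀ x ∈ Ioi (0:ℝ), rexp (-x) * rexp (t * x)
      = x ^ ((1:ℝ) - 1) * rexp (-((1 - t) * x)) := by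
    intro x _
    rw [sub_self, Real.rpow_zero, one_mul, ← Real.exp_add]
    ring_nf
  rw [setIntegral_congr_fun measurableSet_Ioi h3,
    integral_rpow_mul_exp_neg_mul_Ioi zero_lt_one (by linarith)]
  simp [Real.Gamma_one, Real.rpow_one]

lemma iIndepFun_ae_congr' {Ω : Type*} [MeasurableSpace Ω] {P : Measure Ω} {f g : ℕ → Ω → ℝ}
    (h : iIndepFun f P) (hae : ∀ i, f i =ᵐ[P] g i) :
    iIndepFun g P := by
  rw [iIndepFun_iff_measure_inter_preimage_eq_mul] at h ⊢
  intro S sets hsets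
  have h1 : ∀ i, (g i ⁻¹' sets i : Set Ω) =ᵐ[P] (f i ⁻¹' sets i) := by
    intro i
    filter_upwards [hae i] with ω hω
    simp only [eq_iff_iff]
    show g i ω ∈ sets i ↔ f i ω ∈ sets i
    rw [hω]
  have h2 : (⋂ i ∈ S, g i ⁻¹' sets i : Set Ω) =ᵐ[P] (⋂ i ∈ S, f i ⁻¹' sets i) := by
    filter_upwards [ae_all_iff.2 h1] with ω hω
    have hmem : ∀ i, (ω ∈ g i ⁻¹' sets i ↔ ω ∈ f i ⁻¹' sets i) := fun i => iff_of_eq (hω i)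
    simp only [eq_iff_iff]
    show ω ∈ ⋂ i ∈ S, g i ⁻¹' sets i ↔ ω ∈ ⋂ i ∈ S, f i ⁻¹' sets i
    simp only [Set.mem_iInter]
    exact ⟨fun h' i hi => (hmem i).1 (h' i hi), fun h' i hi => (hmem i).2 (h' i hi)⟩
  calc P (⋂ i ∈ S, g i ⁻¹' sets i) = P (⋂ i ∈ S, f i ⁻¹' sets i) := measure_congr h2
    _ = ∏ i ∈ S, P (f i ⁻¹' sets i) := h S hsets
    _ = ∏ i ∈ S, P (g i ⁻¹' sets i) := Finset.prod_congr rfl fun i _ =>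
        (measure_congr (h1 i)).symm

lemma tsum_coef_inj' (p q : ℕ → ℝ) (hp0 : ∀ n, 0 ≤ p n) (hp1 : ∀ n, p n ≤ 1)
    (hq0 : ∀ n, 0 ≤ q n) (hq1 : ∀ n, q n ≤ 1)
    (h : ∀ z : ℝ, 0 < z → z < 1 → ∑' n, p n * z ^ n = ∑' n, q n * z ^ n) :
    ∀ n, p n = q n := by
  have hsum : ∀ (r : ℕ → ℝ), (∀ n, 0 ≤ r n) → (∀ n, r n ≤ 1) → ∀ z : ℝ, 0 < z → z < 1 →
      ∀ m : ℕ, Summable (fun k => r (m + k) * z ^ k) := by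
    intro r hr0 hr1 z hz0 hz1 m
    refine Summable.of_nonneg_of_le (fun k => mul_nonneg (hr0 _) (pow_nonneg hz0.le k))
      (fun k => ?_) (summable_geometric_of_lt_one hz0.le hz1)
    exact mul_le_of_le_one_left (pow_nonneg hz0.le k) (hr1 _)
  -- the tail bound
  have hbound : ∀ (r : ℕ → ℝ), (∀ n, 0 ≤ r n) → (∀ n, r n ≤ 1) → ∀ z : ℝ, 0 < z → z ≤ 1/2 →
      ∀ m : ℕ, |(∑' k, r (k + m) * z ^ k) - r m| ≤ 2 * z := by
    intro r hr0 hr1 z hz0 hz2 m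
    have hz1 : z < 1 := by linarith
    have hs : Summable (fun k => r (k + m) * z ^ k) := by
      refine (hsum r hr0 hr1 z hz0 hz1 m).congr fun k => by rw [add_comm]
    rw [hs.tsum_eq_zero_add]
    simp only [zero_add, pow_zero, mul_one]
    have heq : r m + (∑' k, r (k + 1 + m) * z ^ (k + 1)) - r m
        = ∑' k, r (k + 1 + m) * z ^ (k + 1) := by ring
    rw [heq]
    have hgs : Summable (fun k : ℕ => z ^ (k + 1)) := by
      have := (summable_geometric_of_lt_one hz0.le hz1).mul_right z
      refine this.congr fun k => ?_
      rw [← pow_succ]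
    have habs : ∀ k : ℕ, ‖r (k + 1 + m) * z ^ (k + 1)‖ ≤ z ^ (k + 1) := by
      intro k
      rw [Real.norm_eq_abs, abs_of_nonneg (mul_nonneg (hr0 _) (pow_nonneg hz0.le _))]
      exact mul_le_of_le_one_left (pow_nonneg hz0.le _) (hr1 _)
    have h1 : ‖∑' k, r (k + 1 + m) * z ^ (k + 1)‖ ≤ ∑' k : ℕ, z ^ (k + 1) := by
      refine (norm_tsum_le_tsum_norm ?_).trans (Summable.tsum_le_tsum habs ?_ hgs)
      · exact hgs.of_nonneg_of_le (fun k => norm_nonneg _) habs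
      · exact hgs.of_nonneg_of_le (fun k => norm_nonneg _) habs
    rw [Real.norm_eq_abs] at h1
    refine h1.trans ?_
    have h2 : ∑' k : ℕ, z ^ (k + 1) = (1 - z)⁻¹ * z := by
      rw [← tsum_geometric_of_lt_one hz0.le hz1, ← tsum_mul_right]
      exact tsum_congr fun k => (pow_succ z k).symm
    rw [h2]
    have h3 : (1 - z)⁻¹ ≤ 2 := by
      rw [inv_le_comm₀ (by linarith) (by norm_num)]
      linarith
    nlinarith
  intro n
  induction n using Nat.strong_induction_on with
  | _ n ih =>
    have key : ∀ z : ℝ, 0 < z → z < 1 →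
        (∑' k, p (k + n) * z ^ k) = ∑' k, q (k + n) * z ^ k := by
      intro z hz0 hz1
      have hsp : Summable fun k => p k * z ^ k :=
        (hsum p hp0 hp1 z hz0 hz1 0).congr fun k => by rw [zero_add]
      have hsq : Summable fun k => q k * z ^ k :=
        (hsum q hq0 hq1 z hz0 hz1 0).congr fun k => by rw [zero_add]
      have h1 := h z hz0 hz1
      rw [← hsp.sum_add_tsum_nat_add n, ← hsq.sum_add_tsum_nat_add n] at h1
      have hhead : ∑ i ∈ Finset.range n, p i * z ^ i = ∑ i ∈ Finset.range n, q i * z ^ i :=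
        Finset.sum_congr rfl fun i hi => by rw [ih i (Finset.mem_range.1 hi)]
      have h2 : (∑' k, p (k + n) * z ^ (k + n)) = ∑' k, q (k + n) * z ^ (k + n) := by
        linarith
      have h3 : ∀ r : ℕ → ℝ, (∑' k : ℕ, r (k + n) * z ^ (k + n))
          = z ^ n * ∑' k, r (k + n) * z ^ k := by
        intro r
        rw [← tsum_mul_left]
        exact tsum_congr fun k => by rw [pow_add]; ring
      rw [h3 p, h3 q] at h2
      exact mul_left_cancel₀ (pow_ne_zero n hz0.ne') h2
    have hfin : |p n - q n| ≤ 0 := by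
      refine le_of_forall_pos_le_add fun ε hε => ?_
      rw [zero_add]
      set z : ℝ := min (ε/4) (1/2) with hzdef
      have hz0 : 0 < z := lt_min (by linarith) (by norm_num)
      have hz2 : z ≤ 1/2 := min_le_right _ _
      have hz1 : z < 1 := by linarith
      have hz4 : z ≤ ε/4 := min_le_left _ _
      have hk := key z hz0 hz1
      have hb1 := hbound p hp0 hp1 z hz0 hz2 n
      have hb2 := hbound q hq0 hq1 z hz0 hz2 n
      calc |p n - q n| ≤ |p n - ∑' k, p (k + n) * z ^ k|
            + |(∑' k, p (k + n) * z ^ k) - q n| := abs_sub_le _ _ _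
        _ ≤ 2 * z + 2 * z := by
            have e1 : |p n - ∑' k, p (k + n) * z ^ k| ≤ 2 * z := by
              rw [abs_sub_comm]; exact hb1
            have e2 : |(∑' k, p (k + n) * z ^ k) - q n| ≤ 2 * z := by
              rw [hk]; exact hb2
            exact add_le_add e1 e2
        _ ≤ ε := by linarith
    have := abs_nonpos_iff.1 hfin
    linarith [abs_nonneg (p n - q n), sub_eq_zero.1 this]

open Set in
lemma key_integral' {Ω : Type} [MeasurableSpace Ω] (P : Measure Ω) [IsProbabilityMeasure P]
    (X : Ω → ℕ) (hXm : Measurable X) (η : ℕ → Ω → ℝ) (hm : ∀ i, Measurable (η i))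
    (hind : iIndepFun η P)
    (hdist : ∀ i, Measure.map (η i) P = expMeasure 1)
    (hXη : IndepFun X (fun ω (i : ℕ) => η i ω) P) {t : ℝ} (ht : t < 0) :
    ∫ ω, rexp (t * ∑ i ∈ Finset.range (X ω), η i ω) ∂P
      = ∑' n : ℕ, (P (X ⁻¹' {n})).toReal * ((1 - t)⁻¹) ^ n := by
  -- a.e. nonnegativity
  have hnn : ∀ᵐ ω ∂P, ∀ i, 0 ≤ η i ω := by
    refine ae_all_iff.2 fun i => ?_
    have h0 : P (η i ⁻¹' Iio 0) = 0 := by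
      rw [← Measure.map_apply (hm i) measurableSet_Iio, hdist i]
      show (Measure.withDensity volume (gammaPDF 1 1)) (Iio 0) = 0
      rw [withDensity_apply _ measurableSet_Iio]
      exact lintegral_gammaPDF_of_nonpos le_rfl
    rw [ae_iff]
    convert h0 using 2
    ext ω
    simp [not_le]
  -- measurability of the random sum
  have hS : ∀ n : ℕ, Measurable fun ω => ∑ i ∈ Finset.range n, η i ω := fun n =>
    Finset.measurable_sum _ fun i _ => hm i
  have hSX : Measurable fun ω => ∑ i ∈ Finset.range (X ω), η i ω := by
    have h1 : Measurable fun p : Ω × ℕ => ∑ i ∈ Finset.range p.2, η i p.1 :=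
      measurable_from_prod_countable_left fun n => hS n
    exact h1.comp (measurable_id.prodMk hXm)
  -- integrability
  have hInt : Integrable (fun ω => rexp (t * ∑ i ∈ Finset.range (X ω), η i ω)) P := by
    refine Integrable.mono' (integrable_const 1)
      ((hSX.const_mul t).exp.aestronglyMeasurable) ?_
    filter_upwards [hnn] with ω hω
    rw [Real.norm_eq_abs, abs_of_pos (Real.exp_pos _)]
    have hs0 : 0 ≤ ∑ i ∈ Finset.range (X ω), η i ω := Finset.sum_nonneg fun i _ => hω i
    have : t * ∑ i ∈ Finset.range (X ω), η i ω ≤ 0 := by nlinarith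
    exact Real.exp_le_one_iff.2 this
  -- partition over the values of X
  have hU : (⋃ n : ℕ, X ⁻¹' {n}) = Set.univ := by ext ω; simp
  have hmeasn : ∀ n : ℕ, MeasurableSet (X ⁻¹' {n} : Set Ω) := fun n =>
    hXm (measurableSet_singleton n)
  have hdisj : Pairwise (Function.onFun Disjoint fun n : ℕ => (X ⁻¹' {n} : Set Ω)) := fun i j hij =>
    Set.disjoint_left.2 fun ω h1 h2 => hij (by
      simp only [Set.mem_preimage, Set.mem_singleton_iff] at h1 h2; rw [← h1, ← h2])
  have hsplit : ∫ ω, rexp (t * ∑ i ∈ Finset.range (X ω), η i ω) ∂P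
      = ∑' n : ℕ, ∫ ω in X ⁻¹' {n}, rexp (t * ∑ i ∈ Finset.range (X ω), η i ω) ∂P := by
    rw [← setIntegral_univ, ← hU]
    exact integral_iUnion hmeasn hdisj (hU ▸ hInt.integrableOn)
  rw [hsplit]
  refine tsum_congr fun n => ?_
  -- on `{X = n}` the sum is the fixed sum up to `n`
  have e1 : ∫ ω in X ⁻¹' {n}, rexp (t * ∑ i ∈ Finset.range (X ω), η i ω) ∂P
      = ∫ ω in X ⁻¹' {n}, rexp (t * ∑ i ∈ Finset.range n, η i ω) ∂P := by
    refine setIntegral_congr_fun (hmeasn n) fun ω hω => ?_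
    simp only [Set.mem_preimage, Set.mem_singleton_iff] at hω
    rw [hω]
  rw [e1, ← integral_indicator (hmeasn n)]
  have e2 : Set.indicator (X ⁻¹' {n}) (fun ω => rexp (t * ∑ i ∈ Finset.range n, η i ω))
      = fun ω => (if X ω = n then (1 : ℝ) else 0)
          * rexp (t * ∑ i ∈ Finset.range n, η i ω) := by
    funext ω
    by_cases hω : X ω = n <;> simp [Set.indicator, hω]
  rw [e2]
  -- independence of the two factors
  have hφ : Measurable fun m : ℕ => if m = n then (1 : ℝ) else 0 :=
    measurable_from_top
  have hψ : Measurable fun g : ℕ → ℝ => rexp (t * ∑ i ∈ Finset.range n, g i) :=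
    ((Finset.measurable_sum _ fun i _ => measurable_pi_apply i).const_mul t).exp
  have hindep : IndepFun (fun ω => if X ω = n then (1 : ℝ) else 0)
      (fun ω => rexp (t * ∑ i ∈ Finset.range n, η i ω)) P := hXη.comp hφ hψ
  have e3 := hindep.integral_mul_eq_mul_integral
    ((hφ.comp hXm).aestronglyMeasurable)
    (((hS n).const_mul t).exp.aestronglyMeasurable)
  have e3' : ∫ ω, (if X ω = n then (1 : ℝ) else 0)
        * rexp (t * ∑ i ∈ Finset.range n, η i ω) ∂P
      = (∫ ω, (if X ω = n then (1 : ℝ) else 0) ∂P)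
        * ∫ ω, rexp (t * ∑ i ∈ Finset.range n, η i ω) ∂P := e3
  rw [e3']
  -- the indicator integral
  have e4 : (fun ω => if X ω = n then (1 : ℝ) else 0)
      = Set.indicator (X ⁻¹' {n}) (fun _ => (1 : ℝ)) := by
    funext ω
    by_cases hω : X ω = n <;> simp [Set.indicator, hω]
  have e5 : ∫ ω, (if X ω = n then (1 : ℝ) else 0) ∂P = (P (X ⁻¹' {n})).toReal := by
    rw [e4, integral_indicator_const (1 : ℝ) (hmeasn n), smul_eq_mul, mul_one, measureReal_def]
  rw [e5]
  congr 1
  -- the mgf of the sum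
  have e6 : ∫ ω, rexp (t * ∑ i ∈ Finset.range n, η i ω) ∂P
      = mgf (∑ i ∈ Finset.range n, η i) P t := by
    rw [mgf]
    exact integral_congr_ae (.of_forall fun ω => by simp [Finset.sum_apply])
  rw [e6, hind.mgf_sum hm]
  have e7 : ∀ i : ℕ, mgf (η i) P t = (1 - t)⁻¹ := by
    intro i
    rw [mgf]
    have := integral_map (μ := P) (φ := η i) (f := fun x => rexp (t * x)) (hm i).aemeasurable
      ((continuous_exp.comp (continuous_const.mul continuous_id)).aestronglyMeasurable)
    rw [← this, hdist i, expInt' (by linarith)]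
  rw [Finset.prod_congr rfl fun i _ => e7 i, Finset.prod_const, Finset.card_range]

end AuxExpSum

/-- if `X, Y` are `ℕ`-valued random variables and `(η_i)` is an i.i.d.
sequence of rate-one exponentials independent of `X` and independent of `Y`, and if
`∑_{i<X} η_i ≗ ∑_{i<Y} η_i`, then `X ≗ Y`. -/
theorem exp_sum_dist_inj {Ω : Type} [MeasurableSpace Ω]
    (P : Measure Ω) [IsProbabilityMeasure P]
    (X Y : Ω → ℕ) (hXm : Measurable X) (hYm : Measurable Y)
    (η : ℕ → Ω → ℝ) (hη : IsExpSeq P η)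
    (hXη : IndepFun X (fun ω (i : ℕ) => η i ω) P)
    (hYη : IndepFun Y (fun ω (i : ℕ) => η i ω) P)
    (h : Measure.map (fun ω => ∑ i ∈ Finset.range (X ω), η i ω) P
        = Measure.map (fun ω => ∑ i ∈ Finset.range (Y ω), η i ω) P) :
    Measure.map X P = Measure.map Y P := by
  obtain ⟨hη_indep, hη_dist⟩ := hη
  -- measurable modifications of η
  have hae_i : ∀ i, AEMeasurable (η i) P := by
    intro i
    by_contra hc
    have h0 := hη_dist i
    rw [Measure.map_of_not_aemeasurable hc] at h0
    have h1 : (expMeasure 1) Set.univ = 1 :=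
      (isProbabilityMeasure_expMeasure one_pos).measure_univ
    rw [← h0] at h1
    simp at h1
  set η' : ℕ → Ω → ℝ := fun i => (hae_i i).mk (η i) with hη'def
  have hm' : ∀ i, Measurable (η' i) := fun i => (hae_i i).measurable_mk
  have haei : ∀ i, η i =ᵐ[P] η' i := fun i => (hae_i i).ae_eq_mk
  have hind' : iIndepFun η' P := iIndepFun_ae_congr' hη_indep haei
  have hdist' : ∀ i, Measure.map (η' i) P = expMeasure 1 := fun i => by
    rw [← Measure.map_congr (haei i), hη_dist i]
  have hpath : (fun ω (i : ℕ) => η i ω) =ᵐ[P] fun ω (i : ℕ) => η' i ω := by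
    filter_upwards [ae_all_iff.2 haei] with ω hω
    funext i; exact hω i
  have hXη' : IndepFun X (fun ω (i : ℕ) => η' i ω) P :=
    hXη.congr (Filter.EventuallyEq.refl _ _) hpath
  have hYη' : IndepFun Y (fun ω (i : ℕ) => η' i ω) P :=
    hYη.congr (Filter.EventuallyEq.refl _ _) hpath
  -- a.e. equality of the random sums
  have hsum_ae : ∀ (Z : Ω → ℕ),
      (fun ω => ∑ i ∈ Finset.range (Z ω), η i ω)
        =ᵐ[P] fun ω => ∑ i ∈ Finset.range (Z ω), η' i ω := by
    intro Z
    filter_upwards [ae_all_iff.2 haei] with ω hω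
    exact Finset.sum_congr rfl fun i _ => hω i
  -- measurability of the modified random sums
  have hSX' : ∀ (Z : Ω → ℕ), Measurable Z →
      Measurable fun ω => ∑ i ∈ Finset.range (Z ω), η' i ω := by
    intro Z hZm
    have h0 : ∀ n : ℕ, Measurable fun ω => ∑ i ∈ Finset.range n, η' i ω := fun n =>
      Finset.measurable_sum _ fun i _ => hm' i
    have h1 : Measurable fun p : Ω × ℕ => ∑ i ∈ Finset.range p.2, η' i p.1 :=
      measurable_from_prod_countable_left fun n => h0 n
    exact h1.comp (measurable_id.prodMk hZm)
  -- the coefficient sequences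
  set p : ℕ → ℝ := fun n => (P (X ⁻¹' {n})).toReal with hpdef
  set q : ℕ → ℝ := fun n => (P (Y ⁻¹' {n})).toReal with hqdef
  have hcoef : ∀ n, p n = q n := by
    refine tsum_coef_inj' p q (fun n => ENNReal.toReal_nonneg)
      (fun n => ?_) (fun n => ENNReal.toReal_nonneg) (fun n => ?_) ?_
    · simpa using ENNReal.toReal_mono ENNReal.one_ne_top (prob_le_one (μ := P))
    · simpa using ENNReal.toReal_mono ENNReal.one_ne_top (prob_le_one (μ := P))
    intro z hz0 hz1
    set t : ℝ := 1 - z⁻¹ with htdef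
    have h1z : 1 < z⁻¹ := (one_lt_inv_iff₀).2 ⟨hz0, hz1⟩
    have ht : t < 0 := by rw [htdef]; linarith
    have hzt : (1 - t)⁻¹ = z := by rw [htdef]; simp
    -- the two mgf computations
    have hX := key_integral' P X hXm η' hm' hind' hdist' hXη' ht
    have hY := key_integral' P Y hYm η' hm' hind' hdist' hYη' ht
    rw [hzt] at hX hY
    rw [← hX, ← hY]
    -- transfer to the original η and use the distributional assumption
    have hrw : ∀ (Z : Ω → ℕ), Measurable Z →
        ∫ ω, rexp (t * ∑ i ∈ Finset.range (Z ω), η' i ω) ∂P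
          = ∫ x, rexp (t * x) ∂(Measure.map (fun ω => ∑ i ∈ Finset.range (Z ω), η i ω) P) := by
      intro Z hZm
      have hZae : AEMeasurable (fun ω => ∑ i ∈ Finset.range (Z ω), η i ω) P :=
        ((hSX' Z hZm).aemeasurable).congr (hsum_ae Z).symm
      have hcont : Continuous fun x : ℝ => rexp (t * x) :=
        continuous_exp.comp (continuous_const.mul continuous_id)
      rw [integral_map (μ := P) (f := fun x => rexp (t * x)) hZae hcont.aestronglyMeasurable]
      refine integral_congr_ae ((hsum_ae Z).symm.mono fun ω hω => ?_)
      dsimp only at hω ⊢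
      rw [hω]
    rw [hrw X hXm, hrw Y hYm, h]
  refine Measure.ext_of_singleton fun n => ?_
  rw [Measure.map_apply hXm (measurableSet_singleton n),
    Measure.map_apply hYm (measurableSet_singleton n)]
  exact (ENNReal.toReal_eq_toReal_iff' (measure_ne_top P _) (measure_ne_top P _)).1 (hcoef n)

end
end
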